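/- arXiv:math/9806073 — 2 statements merged into one kernel-verified Lean document; each statement's English description precedes it below -/
import Mathlib

section
/- Let D and f be bounded self-adjoint operators with [D, f] bounded in norm by K, and suppose D² ≥ c·1 with c > 0. Then ‖[f, D(1+D²)^{-1/2}]‖ ≤ K(1+c)^{-1/2} + 2K(1+c)^{-1/2}, i.e., the commutator of f with the bounded transform of D is bounded in norm by 3K/√(1+c). -/
open scoped InnerProductSpace

/-- The bounded transform `T ↦ T(1 + T²)^{-1/2}`, via the continuous functional calculus. -/
noncomputable def boundedTransform {H : Type*} [NormedAddCommGroup H] [InnerProductSpace ℂ H]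
    [CompleteSpace H] (T : H →L[ℂ] H) : H →L[ℂ] H :=
  cfc (fun x : ℝ => x * (Real.sqrt (1 + x ^ 2))⁻¹) T

namespace Stmt9Aux

open MeasureTheory Set Real

/-! ### Scalar integral lemmas -/

lemma intA (b : ℝ) (hb : 0 < b) : (∫ x in Ioi (0:ℝ), (b + x^2)⁻¹) = π / (2 * Real.sqrt b) := by
  have hsb : 0 < Real.sqrt b := Real.sqrt_pos.mpr hb
  have h1 : ∀ x : ℝ, (b + x^2)⁻¹ = b⁻¹ * (1 + ((Real.sqrt b)⁻¹ * x)^2)⁻¹ := by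
    intro x
    have h : (1 + ((Real.sqrt b)⁻¹ * x)^2) = (b + x^2) / b := by
      have hsb' : Real.sqrt b ≠ 0 := hsb.ne'
      field_simp
      rw [Real.sq_sqrt hb.le]
      ring
    rw [h]
    field_simp
  simp_rw [h1]
  rw [MeasureTheory.integral_const_mul]
  have h2 := MeasureTheory.integral_comp_mul_left_Ioi (fun u : ℝ => (1 + u^2)⁻¹) 0
      (inv_pos.mpr hsb)
  simp only [mul_zero] at h2
  rw [h2, integral_Ioi_inv_one_add_sq, arctan_zero, sub_zero, inv_inv, smul_eq_mul]
  rw [eq_div_iff (by positivity)]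
  field_simp
  linear_combination Real.mul_self_sqrt hb.le

lemma intB (b : ℝ) (hb : 0 < b) :
    (∫ μ in Ioi (0:ℝ), (Real.sqrt μ)⁻¹ * (b + μ)⁻¹) = π / Real.sqrt b := by
  have hsb : 0 < Real.sqrt b := Real.sqrt_pos.mpr hb
  have key := MeasureTheory.integral_comp_rpow_Ioi_of_pos
    (g := fun μ : ℝ => (Real.sqrt μ)⁻¹ * (b + μ)⁻¹) (p := 2) (by norm_num)
  rw [← key]
  have heq : EqOn (fun x : ℝ => ((2:ℝ) * x ^ ((2:ℝ) - 1)) • ((Real.sqrt (x ^ (2:ℝ)))⁻¹ * (b + x ^ (2:ℝ))⁻¹))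
      (fun x : ℝ => 2 * (b + x^2)⁻¹) (Ioi 0) := by
    intro x hx
    have hx0 : (0:ℝ) < x := hx
    have hr : x ^ (2:ℝ) = x ^ 2 := by
      rw [show (2:ℝ) = ((2:ℕ):ℝ) by norm_num, Real.rpow_natCast]
    simp only [hr, show (2:ℝ) - 1 = 1 by norm_num, Real.rpow_one, Real.sqrt_sq hx0.le,
      smul_eq_mul]
    field_simp
  rw [setIntegral_congr_fun measurableSet_Ioi heq, MeasureTheory.integral_const_mul, intA b hb]
  have hsb' : Real.sqrt b ≠ 0 := hsb.ne'
  field_simp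

lemma contOn (b : ℝ) (hb : 0 < b) :
    ContinuousOn (fun μ : ℝ => (Real.sqrt μ)⁻¹ * (b + μ)⁻¹) (Ioi 0) := by
  apply ContinuousOn.mul
  · exact ContinuousOn.inv₀ Real.continuous_sqrt.continuousOn
      (fun x hx => (Real.sqrt_pos.mpr hx).ne')
  · exact ContinuousOn.inv₀ (by fun_prop)
      (fun x hx => by have : (0:ℝ) < x := hx; positivity)

lemma sqrt_inv_eq (μ : ℝ) (hμ : 0 < μ) : (Real.sqrt μ)⁻¹ = μ ^ (-(1/2) : ℝ) := by
  rw [Real.sqrt_eq_rpow, ← Real.rpow_neg hμ.le]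

lemma intC (b : ℝ) (hb : 0 < b) :
    IntegrableOn (fun μ : ℝ => (Real.sqrt μ)⁻¹ * (b + μ)⁻¹) (Ioi 0) := by
  have hmeas : AEStronglyMeasurable (fun μ : ℝ => (Real.sqrt μ)⁻¹ * (b + μ)⁻¹)
      (volume.restrict (Ioi (0:ℝ))) :=
    (contOn b hb).aestronglyMeasurable measurableSet_Ioi
  rw [← Ioc_union_Ioi_eq_Ioi (le_of_lt one_pos)]
  apply IntegrableOn.union
  · have hg : IntegrableOn (fun μ : ℝ => b⁻¹ * μ ^ (-(1/2) : ℝ)) (Ioc (0:ℝ) 1) := by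
      apply Integrable.const_mul
      have := intervalIntegral.intervalIntegrable_rpow' (a := 0) (b := 1)
        (r := (-(1/2):ℝ)) (by norm_num)
      exact (intervalIntegrable_iff_integrableOn_Ioc_of_le (by norm_num)).mp this
    refine Integrable.mono' hg (hmeas.mono_measure
      (Measure.restrict_mono Ioc_subset_Ioi_self le_rfl)) ?_
    filter_upwards [ae_restrict_mem measurableSet_Ioc] with μ hμ
    have hμ0 : (0:ℝ) < μ := hμ.1
    rw [Real.norm_of_nonneg (by positivity), ← sqrt_inv_eq μ hμ0]
    have h1 : (b + μ)⁻¹ ≤ b⁻¹ := by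
      apply inv_anti₀ hb; linarith
    calc (Real.sqrt μ)⁻¹ * (b + μ)⁻¹ ≤ (Real.sqrt μ)⁻¹ * b⁻¹ := by
          apply mul_le_mul_of_nonneg_left h1 (by positivity)
      _ = b⁻¹ * (Real.sqrt μ)⁻¹ := mul_comm _ _
  · have hg : IntegrableOn (fun μ : ℝ => μ ^ (-(3/2) : ℝ)) (Ioi (1:ℝ)) :=
      integrableOn_Ioi_rpow_of_lt (by norm_num) one_pos
    refine Integrable.mono' hg (hmeas.mono_measure
      (Measure.restrict_mono (Ioi_subset_Ioi (by norm_num : (0:ℝ) ≤ 1)) le_rfl)) ?_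
    filter_upwards [ae_restrict_mem measurableSet_Ioi] with μ hμ
    have hμ1 : (1:ℝ) < μ := hμ
    have hμ0 : (0:ℝ) < μ := by linarith
    rw [Real.norm_of_nonneg (by positivity), sqrt_inv_eq μ hμ0]
    have h1 : (b + μ)⁻¹ ≤ μ⁻¹ := by
      apply inv_anti₀ hμ0; linarith
    calc μ ^ (-(1/2) : ℝ) * (b + μ)⁻¹ ≤ μ ^ (-(1/2) : ℝ) * μ⁻¹ := by
          apply mul_le_mul_of_nonneg_left h1 (by positivity)
      _ = μ ^ (-(3/2) : ℝ) := by
          rw [← Real.rpow_neg_one μ, ← Real.rpow_add hμ0]; norm_num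

/-! ### Spectrum lemma -/

variable {H : Type*} [NormedAddCommGroup H] [InnerProductSpace ℂ H] [CompleteSpace H]

lemma spec_sq (D : H →L[ℂ] H) (hD : IsSelfAdjoint D) (c : ℝ)
    (hbound : ∀ ω : H, c * ‖ω‖ ^ 2 ≤ (⟪D (D ω), ω⟫_ℂ).re) :
    ∀ x ∈ spectrum ℝ D, c ≤ x ^ 2 := by
  have hsa1 : IsSelfAdjoint ((c : ℂ) • (1 : H →L[ℂ] H)) := by
    rw [IsSelfAdjoint, star_smul, star_one, RCLike.star_def, Complex.conj_ofReal]
  have hP : 0 ≤ D ^ 2 - (c : ℂ) • (1 : H →L[ℂ] H) := by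
    rw [ContinuousLinearMap.nonneg_iff_isPositive]
    refine ⟨((hD.pow 2).sub hsa1).isSymmetric, fun x => ?_⟩
    have hap : (D ^ 2 - (c : ℂ) • (1 : H →L[ℂ] H)) x = D (D x) - (c : ℂ) • x := by
      simp [pow_two, ContinuousLinearMap.sub_apply, ContinuousLinearMap.smul_apply,
        ContinuousLinearMap.mul_apply]
    rw [ContinuousLinearMap.reApplyInnerSelf_apply, hap, inner_sub_left]
    have h2 : ⟪(c : ℂ) • x, x⟫_ℂ = (c : ℂ) * ⟪x, x⟫_ℂ := by
      rw [inner_smul_left]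
      simp
    rw [h2, map_sub]
    have h3 : ((c : ℂ) * ⟪x, x⟫_ℂ).re = c * ‖x‖ ^ 2 := by
      rw [← inner_self_eq_norm_sq (𝕜 := ℂ)]
      simp [Complex.mul_re, inner_self_im]
    have h4 : RCLike.re ((c : ℂ) * ⟪x, x⟫_ℂ) = c * ‖x‖ ^ 2 := h3
    rw [h4]
    have h5 : RCLike.re (⟪D (D x), x⟫_ℂ) = (⟪D (D x), x⟫_ℂ).re := rfl
    rw [h5]
    linarith [hbound x]
  have hcfc : cfc (fun x : ℝ => x ^ 2 - c) D = D ^ 2 - (c : ℂ) • (1 : H →L[ℂ] H) := by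
    rw [cfc_sub (fun x : ℝ => x ^ 2) (fun _ : ℝ => c) D, cfc_pow_id (R := ℝ) D 2 hD,
      cfc_const c D hD, IsScalarTower.algebraMap_apply ℝ ℂ (H →L[ℂ] H) c,
      Algebra.algebraMap_eq_smul_one]
    norm_num
  intro x hx
  have hmem : x ^ 2 - c ∈ spectrum ℝ (D ^ 2 - (c : ℂ) • (1 : H →L[ℂ] H)) := by
    rw [← hcfc, cfc_map_spectrum (fun x : ℝ => x ^ 2 - c) D]
    exact ⟨x, hx, rfl⟩
  linarith [spectrum_nonneg_of_nonneg hP hmem]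

/-! ### cfc machinery -/

noncomputable def cfcCLM (D : H →L[ℂ] H) (hD : IsSelfAdjoint D) :
    C(spectrum ℝ D, ℝ) →L[ℝ] (H →L[ℂ] H) :=
  { toLinearMap := (cfcHom hD (R := ℝ)).toAlgHom.toLinearMap
    cont := (cfcHom_isClosedEmbedding hD).continuous }

lemma cfcCLM_apply (D : H →L[ℂ] H) (hD : IsSelfAdjoint D) (g : C(spectrum ℝ D, ℝ)) :
    cfcCLM D hD g = cfcHom hD (R := ℝ) g := rfl

noncomputable def hfam (D : H →L[ℂ] H) (μ : ℝ) : C(spectrum ℝ D, ℝ) :=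
  ⟨fun x => (Real.sqrt μ)⁻¹ * (1 + (x : ℝ) ^ 2 + max μ 0)⁻¹, by
    have h1 : Continuous fun x : spectrum ℝ D => 1 + (x : ℝ) ^ 2 + max μ 0 := by fun_prop
    have h2 : ∀ x : spectrum ℝ D, 1 + (x : ℝ) ^ 2 + max μ 0 ≠ 0 := fun x => by positivity
    fun_prop (disch := assumption)⟩

lemma hfam_contOn (D : H →L[ℂ] H) : ContinuousOn (hfam D) (Ioi 0) := by
  rw [continuousOn_iff_continuous_restrict]
  have hF : Continuous fun p : Ioi (0:ℝ) × spectrum ℝ D =>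
      (Real.sqrt (p.1 : ℝ))⁻¹ * (1 + (p.2 : ℝ) ^ 2 + (p.1 : ℝ))⁻¹ := by
    have c1 : Continuous fun p : Ioi (0:ℝ) × spectrum ℝ D => (Real.sqrt (p.1 : ℝ))⁻¹ := by
      apply Continuous.inv₀ (by fun_prop)
      exact fun p => (Real.sqrt_pos.mpr p.1.2).ne'
    have c2 : Continuous fun p : Ioi (0:ℝ) × spectrum ℝ D =>
        (1 + (p.2 : ℝ) ^ 2 + (p.1 : ℝ))⁻¹ := by
      apply Continuous.inv₀ (by fun_prop)
      intro p
      have := p.1.2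
      simp only [mem_Ioi] at this
      positivity
    exact c1.mul c2
  have key : (Ioi (0:ℝ)).domRestrict (hfam D) = fun μ : Ioi (0:ℝ) =>
      (ContinuousMap.curry ⟨_, hF⟩) μ := by
    funext μ
    ext x
    simp only [ContinuousMap.curry_apply, ContinuousMap.coe_mk, domRestrict_apply, hfam]
    rw [max_eq_left (le_of_lt μ.2)]
  rw [key]
  exact (ContinuousMap.curry ⟨_, hF⟩).continuous

lemma hfam_norm_le (D : H →L[ℂ] H) (μ : ℝ) (hμ : 0 < μ) :
    ‖hfam D μ‖ ≤ (Real.sqrt μ)⁻¹ * (1 + μ)⁻¹ := by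
  rw [ContinuousMap.norm_le _ (by positivity)]
  intro x
  simp only [hfam, ContinuousMap.coe_mk]
  rw [Real.norm_of_nonneg (by positivity)]
  apply mul_le_mul_of_nonneg_left _ (by positivity)
  rw [max_eq_left hμ.le]
  apply inv_anti₀ (by positivity)
  nlinarith [sq_nonneg (x : ℝ)]

lemma hfam_integrable (D : H →L[ℂ] H) : IntegrableOn (hfam D) (Ioi 0) := by
  refine Integrable.mono' (intC 1 one_pos)
    ((hfam_contOn D).aestronglyMeasurable measurableSet_Ioi) ?_
  filter_upwards [ae_restrict_mem measurableSet_Ioi] with μ hμ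
  have h := hfam_norm_le D μ hμ
  simpa using h

noncomputable def rmap (D : H →L[ℂ] H) : C(spectrum ℝ D, ℝ) :=
  ⟨fun x => (Real.sqrt (1 + (x : ℝ) ^ 2))⁻¹, by
    have h2 : ∀ x : spectrum ℝ D, Real.sqrt (1 + (x : ℝ) ^ 2) ≠ 0 := fun x => by positivity
    fun_prop (disch := assumption)⟩

lemma hfam_integral (D : H →L[ℂ] H) :
    (∫ μ in Ioi (0:ℝ), hfam D μ) = π • rmap D := by
  ext x
  have hev := (ContinuousMap.evalCLM (R := ℝ) x).integral_comp_comm (hfam_integrable D)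
  have h1 : (∫ μ in Ioi (0:ℝ), hfam D μ) x = ∫ μ in Ioi (0:ℝ), (hfam D μ) x := hev.symm
  rw [h1]
  have h2 : (∫ μ in Ioi (0:ℝ), (hfam D μ) x)
      = ∫ μ in Ioi (0:ℝ), (Real.sqrt μ)⁻¹ * ((1 + (x:ℝ)^2) + μ)⁻¹ := by
    refine setIntegral_congr_fun measurableSet_Ioi fun μ hμ => ?_
    simp only [hfam, ContinuousMap.coe_mk]
    rw [max_eq_left (le_of_lt hμ)]
  rw [h2, intB (1 + (x:ℝ)^2) (by positivity)]
  simp only [ContinuousMap.smul_apply, rmap, ContinuousMap.coe_mk, smul_eq_mul]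
  rw [div_eq_mul_inv]

/-! ### operator algebra -/

noncomputable def PsiMap (D f : H →L[ℂ] H) : (H →L[ℂ] H) →L[ℝ] (H →L[ℂ] H) :=
  (ContinuousLinearMap.mul ℝ (H →L[ℂ] H) D).comp
    ((ContinuousLinearMap.mul ℝ (H →L[ℂ] H) f) - (ContinuousLinearMap.mul ℝ (H →L[ℂ] H)).flip f)

lemma PsiMap_apply (D f X : H →L[ℂ] H) : PsiMap D f X = D * (f * X - X * f) := by
  simp [PsiMap, mul_sub]

lemma cont1 (μ : ℝ) (hμ : 0 < μ) : Continuous fun x : ℝ => (1 + x ^ 2 + μ)⁻¹ := by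
  have h2 : ∀ x : ℝ, 1 + x ^ 2 + μ ≠ 0 := fun x => by positivity
  fun_prop (disch := assumption)

noncomputable def Rmu (D : H →L[ℂ] H) (μ : ℝ) : H →L[ℂ] H :=
  cfc (fun x : ℝ => (1 + x ^ 2 + μ)⁻¹) D

section
variable (D : H →L[ℂ] H) (hD : IsSelfAdjoint D) (μ : ℝ) (hμ : 0 < μ)
include hD hμ

omit hμ in
include hD in
lemma Amu_eq : cfc (fun x : ℝ => 1 + x ^ 2 + μ) D = D ^ 2 + ((1 + μ : ℝ) : ℂ) • 1 := by
  have h : (fun x : ℝ => 1 + x ^ 2 + μ) = fun x : ℝ => x ^ 2 + (1 + μ) := by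
    funext x; ring
  rw [h, cfc_add (a := D) (fun x : ℝ => x ^ 2) (fun _ : ℝ => (1 + μ)),
    cfc_pow_id (R := ℝ) D 2 hD,
    cfc_const (1 + μ) D hD, IsScalarTower.algebraMap_apply ℝ ℂ (H →L[ℂ] H) (1 + μ),
    Algebra.algebraMap_eq_smul_one]
  norm_num

lemma RA_eq_one : Rmu D μ * cfc (fun x : ℝ => 1 + x ^ 2 + μ) D = 1 := by
  rw [Rmu, ← cfc_mul _ _ D ((cont1 μ hμ).continuousOn) (by fun_prop)]
  have h : (fun x : ℝ => (1 + x ^ 2 + μ)⁻¹ * (1 + x ^ 2 + μ)) = fun _ : ℝ => 1 := by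
    funext x
    exact inv_mul_cancel₀ (by positivity)
  rw [h, cfc_const_one ℝ D hD]

lemma AR_eq_one : cfc (fun x : ℝ => 1 + x ^ 2 + μ) D * Rmu D μ = 1 := by
  rw [Rmu, ← cfc_mul _ _ D (by fun_prop) ((cont1 μ hμ).continuousOn)]
  have h : (fun x : ℝ => (1 + x ^ 2 + μ) * (1 + x ^ 2 + μ)⁻¹) = fun _ : ℝ => 1 := by
    funext x
    exact mul_inv_cancel₀ (by positivity)
  rw [h, cfc_const_one ℝ D hD]

lemma DR_eq : cfc (fun x : ℝ => x * (1 + x ^ 2 + μ)⁻¹) D = D * Rmu D μ := by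
  rw [cfc_mul (fun x : ℝ => x) _ D (by fun_prop) ((cont1 μ hμ).continuousOn),
    cfc_id' ℝ D hD, Rmu]

lemma DRD_eq : cfc (fun x : ℝ => x * (1 + x ^ 2 + μ)⁻¹ * x) D = D * Rmu D μ * D := by
  rw [cfc_mul _ (fun x : ℝ => x) D (by
      have h2 : ∀ x : ℝ, 1 + x ^ 2 + μ ≠ 0 := fun x => by positivity
      fun_prop (disch := assumption)) (by fun_prop),
    cfc_id' ℝ D hD, DR_eq D hD μ hμ]

end

section
variable (D : H →L[ℂ] H) (hD : IsSelfAdjoint D) (c : ℝ) (hc : 0 < c)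
  (hspec : ∀ x ∈ spectrum ℝ D, c ≤ x ^ 2) (μ : ℝ) (hμ : 0 < μ)

include hD hc hspec hμ in
lemma norm_Rmu_le : ‖Rmu D μ‖ ≤ (1 + c + μ)⁻¹ := by
  rw [Rmu]
  apply norm_cfc_le (by positivity)
  intro x hx
  rw [Real.norm_of_nonneg (by positivity)]
  apply inv_anti₀ (by positivity)
  linarith [hspec x hx]

include hD hc hspec hμ in
lemma norm_DRmu_le : ‖D * Rmu D μ‖ ≤ (Real.sqrt (1 + c + μ))⁻¹ := by
  rw [← DR_eq D hD μ hμ]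
  apply norm_cfc_le (by positivity)
  intro x hx
  have hxc := hspec x hx
  have hs : (0:ℝ) < Real.sqrt (1 + c + μ) := Real.sqrt_pos.mpr (by positivity)
  have hs2 : Real.sqrt (1 + c + μ) ^ 2 = 1 + c + μ := Real.sq_sqrt (by positivity)
  have hd : (0:ℝ) < 1 + x ^ 2 + μ := by positivity
  rw [Real.norm_eq_abs, abs_mul, abs_inv, abs_of_pos hd]
  rw [mul_inv_le_iff₀ hd]
  rw [inv_mul_eq_div, le_div_iff₀ hs]
  nlinarith [sq_nonneg (|x| - Real.sqrt (1 + c + μ)), sq_abs x, abs_nonneg x]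

include hD hμ in
lemma norm_DRmuD_le : ‖D * Rmu D μ * D‖ ≤ 1 := by
  rw [← DRD_eq D hD μ hμ]
  apply norm_cfc_le zero_le_one
  intro x hx
  have hd : (0:ℝ) < 1 + x ^ 2 + μ := by positivity
  rw [Real.norm_eq_abs, show x * (1 + x ^ 2 + μ)⁻¹ * x = x ^ 2 * (1 + x ^ 2 + μ)⁻¹ by ring]
  rw [abs_of_nonneg (by positivity), mul_inv_le_iff₀ hd]
  nlinarith

include hD hc hspec in
lemma norm_R_le :
    ‖cfc (fun x : ℝ => (Real.sqrt (1 + x ^ 2))⁻¹) D‖ ≤ (Real.sqrt (1 + c))⁻¹ := by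
  apply norm_cfc_le (by positivity)
  intro x hx
  rw [Real.norm_of_nonneg (by positivity)]
  apply inv_anti₀ (Real.sqrt_pos.mpr (by positivity))
  exact Real.sqrt_le_sqrt (by linarith [hspec x hx])

include hD hc hspec hμ in
lemma norm_Psi_Rmu_le (f : H →L[ℂ] H) (K : ℝ) (hK : ‖D * f - f * D‖ ≤ K) :
    ‖D * (f * Rmu D μ - Rmu D μ * f)‖ ≤ 2 * K * (1 + c + μ)⁻¹ := by
  have hK0 : (0:ℝ) ≤ K := le_trans (norm_nonneg _) hK
  set C := D * f - f * D with hC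
  set Rm := Rmu D μ with hRm
  set Am := cfc (fun x : ℝ => 1 + x ^ 2 + μ) D with hAm
  have h1 : Rm * Am = 1 := RA_eq_one D hD μ hμ
  have h2 : Am * Rm = 1 := AR_eq_one D hD μ hμ
  have hA : Am * f - f * Am = D * C + C * D := by
    rw [hAm, Amu_eq D hD μ]
    rw [add_mul, mul_add, smul_mul_assoc, one_mul, mul_smul_comm, mul_one]
    rw [hC]
    noncomm_ring
  have key : f * Rm - Rm * f = Rm * (Am * f - f * Am) * Rm := by
    have e1 : Rm * (Am * f - f * Am) * Rm
        = Rm * Am * (f * Rm) - Rm * f * (Am * Rm) := by noncomm_ring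
    rw [e1, h1, h2, one_mul, mul_one]
  have expand : D * (f * Rm - Rm * f)
      = (D * Rm * D) * (C * Rm) + (D * Rm) * C * (D * Rm) := by
    rw [key, hA]
    noncomm_ring
  rw [expand]
  have b1 : ‖(D * Rm * D) * (C * Rm)‖ ≤ K * (1 + c + μ)⁻¹ := by
    calc ‖(D * Rm * D) * (C * Rm)‖ ≤ ‖D * Rm * D‖ * ‖C * Rm‖ := norm_mul_le _ _
      _ ≤ 1 * (K * (1 + c + μ)⁻¹) := by
          apply mul_le_mul (norm_DRmuD_le D hD μ hμ) ?_ (norm_nonneg _) zero_le_one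
          calc ‖C * Rm‖ ≤ ‖C‖ * ‖Rm‖ := norm_mul_le _ _
            _ ≤ K * (1 + c + μ)⁻¹ :=
                mul_le_mul hK (norm_Rmu_le D hD c hc hspec μ hμ) (norm_nonneg _) hK0
      _ = K * (1 + c + μ)⁻¹ := one_mul _
  have b2 : ‖(D * Rm) * C * (D * Rm)‖ ≤ K * (1 + c + μ)⁻¹ := by
    have hs : (0:ℝ) < Real.sqrt (1 + c + μ) := Real.sqrt_pos.mpr (by positivity)
    have hDR := norm_DRmu_le D hD c hc hspec μ hμ
    calc ‖(D * Rm) * C * (D * Rm)‖ ≤ ‖(D * Rm) * C‖ * ‖D * Rm‖ := norm_mul_le _ _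
      _ ≤ (‖D * Rm‖ * ‖C‖) * ‖D * Rm‖ :=
          mul_le_mul_of_nonneg_right (norm_mul_le _ _) (norm_nonneg _)
      _ ≤ ((Real.sqrt (1 + c + μ))⁻¹ * K) * (Real.sqrt (1 + c + μ))⁻¹ := by
          apply mul_le_mul _ hDR (norm_nonneg _) (by positivity)
          exact mul_le_mul hDR hK (norm_nonneg _) (by positivity)
      _ = K * ((Real.sqrt (1 + c + μ))⁻¹ * (Real.sqrt (1 + c + μ))⁻¹) := by ring
      _ = K * (1 + c + μ)⁻¹ := by
          rw [← mul_inv, Real.mul_self_sqrt (by positivity)]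
  calc ‖(D * Rm * D) * (C * Rm) + (D * Rm) * C * (D * Rm)‖
      ≤ ‖(D * Rm * D) * (C * Rm)‖ + ‖(D * Rm) * C * (D * Rm)‖ := norm_add_le _ _
    _ ≤ K * (1 + c + μ)⁻¹ + K * (1 + c + μ)⁻¹ := add_le_add b1 b2
    _ = 2 * K * (1 + c + μ)⁻¹ := by ring

end

end Stmt9Aux

open MeasureTheory Set Real Stmt9Aux in
set_option maxHeartbeats 1000000 in
/-- If `D`, `f` are bounded self-adjoint with `‖[D,f]‖ ≤ K` and `D² ≥ c·1`, `c > 0`, then the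
commutator of `f` with the bounded transform of `D` satisfies
`‖[f, D(1+D²)^{-1/2}]‖ ≤ 3K/√(1+c)`. -/
theorem stmt_9 {H : Type*} [NormedAddCommGroup H] [InnerProductSpace ℂ H] [CompleteSpace H]
    (D f : H →L[ℂ] H) (hD : IsSelfAdjoint D) (hf : IsSelfAdjoint f)
    (K : ℝ) (hK : ‖D * f - f * D‖ ≤ K) (c : ℝ) (hc : 0 < c)
    (hbound : ∀ ω : H, c * ‖ω‖ ^ 2 ≤ (⟪D (D ω), ω⟫_ℂ).re) :
    ‖f * boundedTransform D - boundedTransform D * f‖ ≤ 3 * K / Real.sqrt (1 + c) := by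
  classical
  have hK0 : (0:ℝ) ≤ K := le_trans (norm_nonneg _) hK
  have hspec : ∀ x ∈ spectrum ℝ D, c ≤ x ^ 2 := spec_sq D hD c hbound
  have hs1c : (0:ℝ) < Real.sqrt (1 + c) := Real.sqrt_pos.mpr (by positivity)
  have hcontr : Continuous fun x : ℝ => (Real.sqrt (1 + x ^ 2))⁻¹ := by
    have h2 : ∀ x : ℝ, Real.sqrt (1 + x ^ 2) ≠ 0 := fun x => by positivity
    fun_prop (disch := assumption)
  set R : H →L[ℂ] H := cfc (fun x : ℝ => (Real.sqrt (1 + x ^ 2))⁻¹) D with hR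
  -- identification of cfcCLM values
  have hcfcR : cfcCLM D hD (rmap D) = R := by
    rw [cfcCLM_apply, hR, cfc_apply (fun x : ℝ => (Real.sqrt (1 + x ^ 2))⁻¹) D hD
      hcontr.continuousOn]
    congr 1
  have hcfch : ∀ μ ∈ Ioi (0:ℝ), cfcCLM D hD (hfam D μ) = (Real.sqrt μ)⁻¹ • Rmu D μ := by
    intro μ hμ
    have hμ0 : (0:ℝ) < μ := hμ
    have heq : hfam D μ = (Real.sqrt μ)⁻¹ • ⟨_, ((cont1 μ hμ0).comp continuous_subtype_val :
        Continuous fun x : spectrum ℝ D => (1 + (x:ℝ) ^ 2 + μ)⁻¹)⟩ := by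
      ext x
      simp only [hfam, ContinuousMap.coe_mk, ContinuousMap.smul_apply, smul_eq_mul,
        Function.comp]
      rw [max_eq_left hμ0.le]
    rw [heq, _root_.map_smul, cfcCLM_apply]
    congr 1
    rw [Rmu, cfc_apply (fun x : ℝ => (1 + x ^ 2 + μ)⁻¹) D hD (cont1 μ hμ0).continuousOn]
    congr 1
  -- the key integral identity
  set Λ : C(spectrum ℝ D, ℝ) →L[ℝ] (H →L[ℂ] H) := (PsiMap D f).comp (cfcCLM D hD) with hΛ
  have hint : Λ (∫ μ in Ioi (0:ℝ), hfam D μ) = ∫ μ in Ioi (0:ℝ), Λ (hfam D μ) :=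
    (Λ.integral_comp_comm (hfam_integrable D)).symm
  have hlhs : Λ (∫ μ in Ioi (0:ℝ), hfam D μ) = π • (D * (f * R - R * f)) := by
    rw [hfam_integral D, _root_.map_smul, hΛ, ContinuousLinearMap.comp_apply, hcfcR, PsiMap_apply]
  -- norm bound on the integral
  have hbnd : ∀ μ ∈ Ioi (0:ℝ),
      ‖Λ (hfam D μ)‖ ≤ (2 * K) * ((Real.sqrt μ)⁻¹ * ((1 + c) + μ)⁻¹) := by
    intro μ hμ
    have hμ0 : (0:ℝ) < μ := hμ
    rw [hΛ, ContinuousLinearMap.comp_apply, hcfch μ hμ, _root_.map_smul, PsiMap_apply]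
    rw [norm_smul, Real.norm_of_nonneg (by positivity)]
    have h1 := norm_Psi_Rmu_le D hD c hc hspec μ hμ0 f K hK
    have h2 : (1 + c + μ)⁻¹ = ((1 + c) + μ)⁻¹ := by norm_num
    calc (Real.sqrt μ)⁻¹ * ‖D * (f * Rmu D μ - Rmu D μ * f)‖
        ≤ (Real.sqrt μ)⁻¹ * (2 * K * (1 + c + μ)⁻¹) :=
          mul_le_mul_of_nonneg_left h1 (by positivity)
      _ = (2 * K) * ((Real.sqrt μ)⁻¹ * ((1 + c) + μ)⁻¹) := by rw [h2]; ring
  have hgint : IntegrableOn (fun μ : ℝ => (2 * K) * ((Real.sqrt μ)⁻¹ * ((1 + c) + μ)⁻¹))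
      (Ioi 0) := (intC (1 + c) (by positivity)).const_mul _
  have hnorm : ‖∫ μ in Ioi (0:ℝ), Λ (hfam D μ)‖
      ≤ ∫ μ in Ioi (0:ℝ), (2 * K) * ((Real.sqrt μ)⁻¹ * ((1 + c) + μ)⁻¹) := by
    apply norm_integral_le_of_norm_le hgint
    filter_upwards [ae_restrict_mem measurableSet_Ioi] with μ hμ
    exact hbnd μ hμ
  have hval : (∫ μ in Ioi (0:ℝ), (2 * K) * ((Real.sqrt μ)⁻¹ * ((1 + c) + μ)⁻¹))
      = 2 * K * (π / Real.sqrt (1 + c)) := by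
    rw [MeasureTheory.integral_const_mul, intB (1 + c) (by positivity)]
  have hDfR : ‖D * (f * R - R * f)‖ ≤ 2 * K / Real.sqrt (1 + c) := by
    have h := hnorm
    rw [← hint, hlhs, hval] at h
    rw [norm_smul, Real.norm_of_nonneg Real.pi_pos.le] at h
    have hπ : (0:ℝ) < π := Real.pi_pos
    have h2 : 2 * K * (π / Real.sqrt (1 + c)) = π * (2 * K / Real.sqrt (1 + c)) := by ring
    rw [h2] at h
    exact le_of_mul_le_mul_left h hπ
  -- boundedTransform D = D * R
  have hB : boundedTransform D = D * R := by
    rw [boundedTransform, cfc_mul (fun x : ℝ => x) _ D (by fun_prop) hcontr.continuousOn,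
      cfc_id' ℝ D hD, hR]
  -- final assembly
  have hsplit : f * boundedTransform D - boundedTransform D * f
      = (f * D - D * f) * R + D * (f * R - R * f) := by
    rw [hB]
    noncomm_ring
  have hCR : ‖(f * D - D * f) * R‖ ≤ K * (Real.sqrt (1 + c))⁻¹ := by
    have hfd : ‖f * D - D * f‖ ≤ K := by
      rw [show f * D - D * f = -(D * f - f * D) from (neg_sub _ _).symm, norm_neg]
      exact hK
    calc ‖(f * D - D * f) * R‖ ≤ ‖f * D - D * f‖ * ‖R‖ := norm_mul_le _ _
      _ ≤ K * (Real.sqrt (1 + c))⁻¹ :=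
          mul_le_mul hfd (norm_R_le D hD c hc hspec) (norm_nonneg _) hK0
  rw [hsplit]
  calc ‖(f * D - D * f) * R + D * (f * R - R * f)‖
      ≤ ‖(f * D - D * f) * R‖ + ‖D * (f * R - R * f)‖ := norm_add_le _ _
    _ ≤ K * (Real.sqrt (1 + c))⁻¹ + 2 * K / Real.sqrt (1 + c) := add_le_add hCR hDfR
    _ = 3 * K / Real.sqrt (1 + c) := by
        rw [div_eq_mul_inv, div_eq_mul_inv]
        ring
end

section
/- Let A be a bounded self-adjoint operator with A² = 1, and let (D_λ)_{λ>0} be self-adjoint operators of the form D_λ = D + λA with D self-adjoint (bounded), ‖DA + AD‖ ≤ C. Then for every vector ω, B_λ ω → Aω as λ → ∞, where B_λ = D_λ(1 + D_λ²)^{-1/2}. -/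
set_option maxHeartbeats 4000000
set_option synthInstance.maxHeartbeats 1000000

section RealAux

lemma rem_abs_bound (m y s : ℝ) (hs : 0 < s) (h1 : s^2 ≤ 1+m) (h2 : s^2 ≤ 1+y) :
    |(Real.sqrt (1+y))⁻¹ - ((Real.sqrt (1+m))⁻¹ - (y-m)/(2*(Real.sqrt (1+m))^3))|
      ≤ (y-m)^2/(2*s^5) := by
  have hy : (0:ℝ) ≤ 1+y := le_trans (by positivity) h2
  have hm : (0:ℝ) ≤ 1+m := le_trans (by positivity) h1
  set u := Real.sqrt (1+y) with hu_def
  set v := Real.sqrt (1+m) with hv_def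
  have hu2 : u^2 = 1+y := Real.sq_sqrt hy
  have hv2 : v^2 = 1+m := Real.sq_sqrt hm
  have hsu : s ≤ u := by
    have := Real.sqrt_le_sqrt h2
    rwa [Real.sqrt_sq hs.le] at this
  have hsv : s ≤ v := by
    have := Real.sqrt_le_sqrt h1
    rwa [Real.sqrt_sq hs.le] at this
  have hu0 : 0 < u := lt_of_lt_of_le hs hsu
  have hv0 : 0 < v := lt_of_lt_of_le hs hsv
  have hym : y - m = u^2 - v^2 := by rw [hu2, hv2]; ring
  have hid : u⁻¹ - (v⁻¹ - (y-m)/(2*v^3)) = (y-m)^2*(u+2*v)/(2*u*v^3*(u+v)^2) := by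
    rw [hym]
    field_simp
    ring
  rw [hid, abs_of_nonneg (by positivity)]
  rw [div_le_div_iff₀ (by positivity) (by positivity)]
  have k1 : s^3 ≤ v^3 := pow_le_pow_left₀ hs.le hsv 3
  have c1 : s*(s^3*(s+s)) ≤ u*(v^3*(u+v)) := by
    apply mul_le_mul hsu ?_ (by positivity) hu0.le
    apply mul_le_mul k1 (by linarith) (by positivity) (by positivity)
  nlinarith [sq_nonneg (y-m), mul_nonneg (sq_nonneg (y-m)) (mul_nonneg hu0.le (pow_pos hs 5).le),
    mul_le_mul_of_nonneg_left c1 (sq_nonneg (y-m)),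
    mul_nonneg (mul_nonneg (sq_nonneg (y-m)) hs.le)
      (mul_nonneg (pow_pos hs 3).le (by linarith : (0:ℝ) ≤ u+v))]

end RealAux

section OpAux

variable {H : Type*} [NormedAddCommGroup H] [InnerProductSpace ℂ H] [CompleteSpace H]

lemma alg_nonneg' (r : ℝ) (hr : 0 ≤ r) : (0:H →L[ℂ] H) ≤ algebraMap ℝ _ r := by
  have h := star_mul_self_nonneg ((Real.sqrt r : ℝ) • (1 : H →L[ℂ] H))
  rw [star_smul, star_trivial, star_one, smul_mul_smul_comm, one_mul,
    Real.mul_self_sqrt hr] at h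
  rwa [Algebra.algebraMap_eq_smul_one]

lemma alg_mono' (r₁ r₂ : ℝ) (h : r₁ ≤ r₂) :
    algebraMap ℝ (H →L[ℂ] H) r₁ ≤ algebraMap ℝ _ r₂ := by
  have := alg_nonneg' (H := H) (r₂ - r₁) (by linarith)
  rw [map_sub, sub_nonneg] at this; exact this

lemma real_smul_nonneg (r : ℝ) (hr : 0 ≤ r) (X : H →L[ℂ] H) (hX : 0 ≤ X) : 0 ≤ r • X := by
  have h := star_left_conjugate_nonneg hX ((Real.sqrt r : ℝ) • (1 : H →L[ℂ] H))
  rw [star_smul, star_trivial, star_one] at h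
  calc (0:H →L[ℂ] H) ≤ _ := h
  _ = r • X := by
      rw [smul_mul_assoc, one_mul, mul_smul_comm, mul_one, smul_smul, Real.mul_self_sqrt hr]

lemma norm_le_add_alg (K : H →L[ℂ] H) (hK : IsSelfAdjoint K) (C : ℝ) (hC : ‖K‖ ≤ C) :
    0 ≤ algebraMap ℝ _ C + K := by
  have h1 := hK.neg_algebraMap_norm_le_self
  have h2 := alg_mono' (H := H) ‖K‖ C hC
  calc (0:H →L[ℂ] H) = algebraMap ℝ _ C - algebraMap ℝ _ C := (sub_self _).symm
  _ ≤ algebraMap ℝ _ C + K := by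
      rw [sub_eq_add_neg]
      gcongr
      exact le_trans (neg_le_neg h2) h1

lemma spec_sq_lower (T : H →L[ℂ] H) (hT : IsSelfAdjoint T) (c : ℝ)
    (hle : algebraMap ℝ _ c ≤ T ^ 2) (x : ℝ) (hx : x ∈ spectrum ℝ T) : c ≤ x ^ 2 := by
  have h0 : 0 ≤ cfc (fun x : ℝ => x ^ 2 - c) T := by
    rw [cfc_sub _ _ T, cfc_pow_id T 2, cfc_const c T]
    exact sub_nonneg.mpr hle
  have := spectrum_nonneg_of_nonneg h0 (by
    rw [cfc_map_spectrum (fun x : ℝ => x ^ 2 - c) T]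
    exact Set.mem_image_of_mem _ hx)
  linarith

lemma spec_sq_upper (T : H →L[ℂ] H) (hT : IsSelfAdjoint T) (c : ℝ)
    (hle : T ^ 2 ≤ algebraMap ℝ _ c) (x : ℝ) (hx : x ∈ spectrum ℝ T) : x ^ 2 ≤ c := by
  have h0 : 0 ≤ cfc (fun x : ℝ => c - x ^ 2) T := by
    rw [cfc_sub _ _ T, cfc_pow_id T 2, cfc_const c T]
    exact sub_nonneg.mpr hle
  have := spectrum_nonneg_of_nonneg h0 (by
    rw [cfc_map_spectrum (fun x : ℝ => c - x ^ 2) T]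
    exact Set.mem_image_of_mem _ hx)
  linarith

end OpAux

/-- If `A` is bounded self-adjoint with `A² = 1`, `D` is bounded self-adjoint with
`‖DA + AD‖ ≤ C`, and `D_λ = D + λA`, then the bounded transforms
`B_λ = D_λ(1 + D_λ²)^{-1/2}` converge strongly to `A` as `λ → ∞`. -/
theorem stmt_10 {H : Type*} [NormedAddCommGroup H] [InnerProductSpace ℂ H] [CompleteSpace H]
    (D A : H →L[ℂ] H) (hD : IsSelfAdjoint D) (hA : IsSelfAdjoint A)
    (hA2 : A * A = 1) (C : ℝ) (hDA : ‖D * A + A * D‖ ≤ C) (ω : H) :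
    Filter.Tendsto (fun lam : ℝ => boundedTransform (D + lam • A) ω)
      Filter.atTop (nhds (A ω)) := by
  have hC : 0 ≤ C := le_trans (norm_nonneg _) hDA
  set M := ‖D‖ with hMdef
  have hM0 : 0 ≤ M := norm_nonneg _
  have hA1 : ‖A‖ ≤ 1 := by
    have h : ‖star A * A‖ = ‖A‖ * ‖A‖ := CStarRing.norm_star_mul_self
    rw [hA.star_eq, hA2] at h
    have h1 : ‖(1 : H →L[ℂ] H)‖ ≤ 1 := ContinuousLinearMap.norm_id_le
    nlinarith [norm_nonneg A]
  set K : H →L[ℂ] H := D * A + A * D with hKdef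
  have hKsa : IsSelfAdjoint K := by
    rw [hKdef, IsSelfAdjoint, star_add, star_mul, star_mul, hA.star_eq, hD.star_eq]
    abel
  set C₂ : ℝ := C + 2*M + M^2 with hC2def
  have hC₂0 : 0 ≤ C₂ := by positivity
  set Ktot : ℝ := 16*(1+M)*C₂^2 + M + 1 + (1+M)*(M^2+C)/2 with hKtotdef
  -- main norm bound
  have hbound : ∀ᶠ lam : ℝ in Filter.atTop,
      ‖boundedTransform (D + lam • A) - A‖ ≤ Ktot / lam := by
    filter_upwards [Filter.eventually_ge_atTop (2*(C+M+1))] with lam hlam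
    have hlam2 : (2:ℝ) ≤ lam := le_trans (by linarith) hlam
    have hlam1 : (1:ℝ) ≤ lam := by linarith
    have hlam0 : (0:ℝ) < lam := by linarith
    have hlamC : 2*C ≤ lam := by linarith
    have hlamM : 2*M ≤ lam := by linarith
    set T : H →L[ℂ] H := D + lam • A with hTdef
    have hTsa : IsSelfAdjoint T := by
      refine hD.add ?_
      rw [IsSelfAdjoint, star_smul, star_trivial, hA.star_eq]
    have hTnorm : ‖T‖ ≤ lam + M := by
      calc ‖T‖ ≤ ‖D‖ + ‖lam • A‖ := norm_add_le _ _
      _ ≤ M + lam * 1 := by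
          rw [norm_smul]
          gcongr
          · rw [Real.norm_eq_abs, abs_of_pos hlam0]
      _ = lam + M := by ring
    have hT2 : T ^ 2 = D * D + lam • K + (lam^2) • (1 : H →L[ℂ] H) := by
      rw [sq, hTdef, hKdef]
      simp only [add_mul, mul_add, smul_mul_assoc, mul_smul_comm, smul_smul, hA2]
      module
    -- spectrum bounds
    have hspec_lower : ∀ x ∈ spectrum ℝ T, lam^2 - lam*C ≤ x^2 := by
      intro x hx
      apply spec_sq_lower T hTsa _ _ x hx
      have h1 : 0 ≤ D * D := by
        have := star_mul_self_nonneg D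
        rwa [hD.star_eq] at this
      have h2 : 0 ≤ algebraMap ℝ (H →L[ℂ] H) C + K := norm_le_add_alg K hKsa C hDA
      have h3 : 0 ≤ lam • (algebraMap ℝ (H →L[ℂ] H) C + K) := real_smul_nonneg lam hlam0.le _ h2
      have key : T ^ 2 - algebraMap ℝ _ (lam^2 - lam*C)
          = D * D + lam • (algebraMap ℝ (H →L[ℂ] H) C + K) := by
        rw [hT2, Algebra.algebraMap_eq_smul_one, Algebra.algebraMap_eq_smul_one]
        module
      have h4 := add_nonneg h1 h3
      rw [← key, sub_nonneg] at h4
      exact h4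
    have hsq_upper : ∀ x ∈ spectrum ℝ T, x^2 ≤ (lam+M)^2 := by
      intro x hx
      apply spec_sq_upper T hTsa _ _ x hx
      have h1 : T^2 ≤ algebraMap ℝ _ ‖T^2‖ := (hTsa.pow 2).le_algebraMap_norm_self
      refine le_trans h1 (alg_mono' _ _ ?_)
      calc ‖T^2‖ = ‖T*T‖ := by rw [sq]
      _ ≤ ‖T‖*‖T‖ := norm_mul_le _ _
      _ ≤ (lam+M)^2 := by
          have h9 := mul_self_le_mul_self (norm_nonneg T) hTnorm
          linarith [h9]
    have habs : ∀ x ∈ spectrum ℝ T, |x| ≤ lam + M := by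
      intro x hx
      exact abs_le.mpr (abs_le_of_sq_le_sq' (hsq_upper x hx) (by linarith))
    -- setup for polynomial approx
    set v : ℝ := Real.sqrt (1 + lam^2) with hvdef
    have hv2 : v^2 = 1 + lam^2 := Real.sq_sqrt (by positivity)
    have hvlam : lam ≤ v := by
      have := Real.sqrt_le_sqrt (show lam^2 ≤ 1 + lam^2 by linarith)
      rwa [Real.sqrt_sq hlam0.le] at this
    have hv0 : 0 < v := lt_of_lt_of_le hlam0 hvlam
    have hv1 : 1 ≤ v := le_trans hlam1 hvlam
    set a : ℝ := v⁻¹ with hadef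
    set b : ℝ := (2*v^3)⁻¹ with hbdef
    set P : ℝ → ℝ := fun x => a*x - b*(x^3 - lam^2*x) with hPdef
    set f : ℝ → ℝ := fun x => x * (Real.sqrt (1 + x ^ 2))⁻¹ with hfdef
    have hsqrt_ne : ∀ x : ℝ, Real.sqrt (1 + x^2) ≠ 0 :=
      fun x => ne_of_gt (Real.sqrt_pos.mpr (by positivity))
    have hf_cont : Continuous f := by
      rw [hfdef]
      exact continuous_id'.mul
        ((Real.continuous_sqrt.comp (continuous_const.add (continuous_pow 2))).inv₀ hsqrt_ne)
    have hP_cont : Continuous P := by rw [hPdef]; fun_prop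
    -- split
    have hsplit : boundedTransform T = cfc P T + cfc (fun x => f x - P x) T := by
      have heq : (fun x : ℝ => x * (Real.sqrt (1 + x ^ 2))⁻¹)
          = fun x => P x + (f x - P x) := by
        funext x; simp only [hfdef, hPdef]; ring
      rw [boundedTransform, heq,
        cfc_add (a := T) P (fun x => f x - P x) hP_cont.continuousOn ((hf_cont.sub hP_cont).continuousOn)]
    -- polynomial part
    have hcfcP : cfc P T = a • T - b • (T^3 - lam^2 • T) := by
      rw [hPdef]
      rw [cfc_sub (fun x : ℝ => a*x) (fun x : ℝ => b*(x^3 - lam^2*x)) T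
        (by fun_prop) (by fun_prop)]
      rw [cfc_const_mul_id a T hTsa]
      rw [cfc_const_mul b (fun x : ℝ => x^3 - lam^2*x) T (by fun_prop)]
      rw [cfc_sub (fun x : ℝ => x^3) (fun x : ℝ => lam^2*x) T (by fun_prop) (by fun_prop)]
      rw [cfc_pow_id T 3, cfc_const_mul_id (lam^2) T hTsa]
    have hT3 : T^3 - lam^2 • T = T * (D * D + lam • K) := by
      have h5 : T^3 = T * T^2 := by rw [pow_succ, pow_two]; noncomm_ring
      rw [h5, hT2, mul_add, mul_add, mul_smul_comm, mul_smul_comm, mul_one]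
      module
    have hPT : cfc P T - A = a • D + (a*lam - 1) • A - b • (T * (D * D + lam • K)) := by
      rw [hcfcP, hT3, hTdef]
      module
    -- norm bounds on polynomial part
    have ha_le : a ≤ lam⁻¹ := by
      rw [hadef]
      exact inv_anti₀ hlam0 hvlam
    have ha0 : 0 < a := by rw [hadef]; positivity
    have hterm1 : ‖a • D‖ ≤ M / lam := by
      rw [norm_smul, Real.norm_eq_abs, abs_of_pos ha0]
      calc a * M ≤ lam⁻¹ * M := by gcongr
      _ = M / lam := by rw [inv_mul_eq_div]
    have halam : a * lam = lam / v := by rw [hadef]; ring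
    have hterm2 : ‖(a*lam - 1) • A‖ ≤ 1 / lam := by
      rw [norm_smul, Real.norm_eq_abs]
      have h1 : a * lam - 1 ≤ 0 := by
        rw [sub_nonpos, halam]
        exact (div_le_one hv0).mpr hvlam
      have h2 : 1 - a*lam ≤ 1/lam := by
        have h3 : 1 - a*lam = 1/(v*(v+lam)) := by
          rw [halam]
          rw [eq_div_iff (by positivity)]
          field_simp
          nlinarith [hv2]
        rw [h3]
        apply one_div_le_one_div_of_le hlam0
        linarith [mul_le_mul_of_nonneg_right hv1 hlam0.le, sq_nonneg v]
      calc |a*lam - 1| * ‖A‖ ≤ |a*lam-1| * 1 := by gcongr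
      _ = 1 - a*lam := by rw [mul_one, abs_of_nonpos h1]; ring
      _ ≤ 1/lam := h2
    have hterm3 : ‖b • (T * (D * D + lam • K))‖ ≤ (1+M)*(M^2+C)/(2*lam) := by
      have hb0 : 0 < b := by rw [hbdef]; positivity
      have hble : b ≤ (2*lam^3)⁻¹ := by
        rw [hbdef]
        apply inv_anti₀ (by positivity)
        have : lam^3 ≤ v^3 := pow_le_pow_left₀ hlam0.le hvlam 3
        linarith
      have hinner : ‖D * D + lam • K‖ ≤ M^2 + lam*C := by
        calc ‖D * D + lam • K‖ ≤ ‖D*D‖ + ‖lam • K‖ := norm_add_le _ _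
        _ ≤ M*M + |lam| * C := by
            gcongr
            · exact norm_mul_le _ _
            · rw [norm_smul, Real.norm_eq_abs]
              gcongr
        _ = M^2 + lam*C := by rw [abs_of_pos hlam0]; ring
      calc ‖b • (T * (D * D + lam • K))‖ = |b| * ‖T * (D * D + lam • K)‖ := by
            rw [norm_smul, Real.norm_eq_abs]
      _ ≤ (2*lam^3)⁻¹ * ((lam + M) * (M^2 + lam*C)) := by
          rw [abs_of_pos hb0]
          apply mul_le_mul hble ?_ (norm_nonneg _) (by positivity)
          calc ‖T * (D * D + lam • K)‖ ≤ ‖T‖ * ‖D * D + lam • K‖ := norm_mul_le _ _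
          _ ≤ (lam + M) * (M^2 + lam*C) :=
              mul_le_mul hTnorm hinner (norm_nonneg _) (by positivity)
      _ ≤ (2*lam^3)⁻¹ * ((lam*(1+M)) * (lam*(M^2+C))) := by
          have e1 : (0:ℝ) ≤ lam - 1 := by linarith
          gcongr
          · linarith [mul_nonneg e1 hM0]
          · linarith [mul_nonneg e1 (sq_nonneg M)]
      _ = (1+M)*(M^2+C)/(2*lam) := by
          field_simp
    -- remainder bound
    have hrem : ‖cfc (fun x => f x - P x) T‖ ≤ 16*(1+M)*C₂^2 / lam := by
      apply norm_cfc_le (by positivity)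
      intro x hx
      have hxl := hspec_lower x hx
      have hx2u := hsq_upper x hx
      have hxu := habs x hx
      rw [Real.norm_eq_abs]
      have hfact : f x - P x
          = x * ((Real.sqrt (1 + x^2))⁻¹
              - ((Real.sqrt (1+lam^2))⁻¹ - (x^2 - lam^2)/(2*(Real.sqrt (1+lam^2))^3))) := by
        simp only [hfdef, hPdef, hadef, hbdef, hvdef]
        field_simp
      rw [hfact, abs_mul]
      have hs0 : (0:ℝ) < lam/2 := by linarith
      have hlamC2 : lam*C ≤ lam^2/2 := by
        have := mul_le_mul_of_nonneg_left (show C ≤ lam/2 by linarith) hlam0.le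
        linarith [this]
      have hq1 : (lam/2)^2 ≤ 1 + lam^2 := by rw [div_pow]; linarith [sq_nonneg lam]
      have hq2 : (lam/2)^2 ≤ 1 + x^2 := by rw [div_pow]; linarith [hxl, hlamC2]
      have hrb := rem_abs_bound (lam^2) (x^2) (lam/2) hs0 hq1 hq2
      have hdev : (x^2 - lam^2)^2 ≤ (lam*C₂)^2 := by
        have e1 : M^2 ≤ lam*M^2 := le_mul_of_one_le_left (sq_nonneg M) hlam1
        have e2 : (0:ℝ) ≤ lam*C := mul_nonneg hlam0.le hC
        have e3 : (0:ℝ) ≤ lam*M := mul_nonneg hlam0.le hM0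
        have e4 : (0:ℝ) ≤ lam*M^2 := mul_nonneg hlam0.le (sq_nonneg M)
        have h1 : x^2 - lam^2 ≤ lam*C₂ := by rw [hC2def]; linarith [hx2u, e1, e2]
        have h2 : -(lam*C₂) ≤ x^2 - lam^2 := by rw [hC2def]; linarith [hxl, e2, e3, e4]
        exact sq_le_sq' h2 h1
      calc |x| * |(Real.sqrt (1 + x^2))⁻¹
              - ((Real.sqrt (1+lam^2))⁻¹ - (x^2 - lam^2)/(2*(Real.sqrt (1+lam^2))^3))|
          ≤ (lam + M) * ((x^2-lam^2)^2/(2*(lam/2)^5)) :=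
            mul_le_mul hxu hrb (abs_nonneg _) (by positivity)
      _ ≤ (lam*(1+M)) * ((lam*C₂)^2/(2*(lam/2)^5)) := by
            have e1 : (0:ℝ) ≤ lam - 1 := by linarith
            gcongr
            · linarith [mul_nonneg e1 hM0]
      _ = 16*(1+M)*C₂^2 / lam^2 := by
            field_simp
            ring
      _ ≤ 16*(1+M)*C₂^2 / lam := by
            apply div_le_div_of_nonneg_left (by positivity) hlam0
            linarith [mul_le_mul_of_nonneg_left hlam1 hlam0.le]
    -- assemble
    calc ‖boundedTransform T - A‖
        = ‖(cfc P T - A) + cfc (fun x => f x - P x) T‖ := by rw [hsplit]; congr 1; abel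
    _ ≤ ‖cfc P T - A‖ + ‖cfc (fun x => f x - P x) T‖ := norm_add_le _ _
    _ ≤ (M/lam + 1/lam + (1+M)*(M^2+C)/(2*lam)) + 16*(1+M)*C₂^2/lam := by
        gcongr
        rw [hPT]
        calc ‖a • D + (a*lam - 1) • A - b • (T * (D * D + lam • K))‖
            ≤ ‖a • D + (a*lam - 1) • A‖ + ‖b • (T * (D * D + lam • K))‖ := norm_sub_le _ _
        _ ≤ (‖a • D‖ + ‖(a*lam - 1) • A‖) + ‖b • (T * (D * D + lam • K))‖ := by
            gcongr; exact norm_add_le _ _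
        _ ≤ M/lam + 1/lam + (1+M)*(M^2+C)/(2*lam) := by linarith
    _ = Ktot / lam := by rw [hKtotdef]; field_simp; ring
  -- conclude
  have hnorm0 : Filter.Tendsto (fun lam : ℝ => ‖boundedTransform (D + lam • A) - A‖)
      Filter.atTop (nhds 0) := by
    apply squeeze_zero' (Filter.Eventually.of_forall fun _ => norm_nonneg _) hbound
    exact Filter.Tendsto.div_atTop tendsto_const_nhds Filter.tendsto_id
  rw [tendsto_iff_norm_sub_tendsto_zero]
  apply squeeze_zero (fun lam => norm_nonneg _)
    (g := fun lam => ‖boundedTransform (D + lam • A) - A‖ * ‖ω‖)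
  · intro lam
    rw [← ContinuousLinearMap.sub_apply]
    exact ContinuousLinearMap.le_opNorm _ _
  · simpa using hnorm0.mul_const ‖ω‖
end
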